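/- Let X be a real Banach space and n ∈ ℕ. For 0 ≤ k ≤ n let P_k be a continuous k-multilinear map X^k → X (with P₀ a fixed element of X), set P(x) := Σ_{k=0}^n P_k(x, …, x) for x ∈ X, and 𝔓(a) := Σ_{k=0}^n ‖P_k‖·a^k for a ∈ ℝ, where ‖P_k‖ denotes the operator norm of P_k. Let C ∈ X, let U be an open neighborhood of 0 in ℝ, and let Z : U → X be infinitely differentiable and satisfy Z(λ) = λ·P(Z(λ)) + C for all λ ∈ U. Let K be a real-valued function, real analytic on some neighborhood of 0 in ℝ, satisfying K(λ) = λ·𝔓(K(λ)) + ‖C‖_X there. Then for every r ∈ ℕ: ‖(d^r Z/dλ^r)(0)‖_X ≤ (d^r K/dλ^r)(0); that is, the formal Taylor series of Z at 0 is majored by the Taylor series of K at 0. -/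

import Mathlib

open Filter Function
open scoped ContDiff

section Aux

variable {Y : Type*} [NormedAddCommGroup Y] [NormedSpace ℝ Y]
variable {W : Type*} [NormedAddCommGroup W] [NormedSpace ℝ W]

/-- Number of occurrences of `i` in the tuple `c`. -/
def st17cnt {r k : ℕ} (c : Fin r → Fin k) (i : Fin k) : ℕ :=
  ∑ t, if c t = i then 1 else 0

lemma st17cnt_le {r k : ℕ} (c : Fin r → Fin k) (i : Fin k) : st17cnt c i ≤ r := by
  calc st17cnt c i ≤ ∑ _t : Fin r, 1 :=
        Finset.sum_le_sum (fun t _ => by split <;> simp)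
    _ = r := by simp

lemma st17cnt_cons {r k : ℕ} (c : Fin r → Fin k) (j i : Fin k) :
    st17cnt (Fin.cons j c) i = (if j = i then 1 else 0) + st17cnt c i := by
  unfold st17cnt
  rw [Fin.sum_univ_succ]
  simp

lemma st17_iteratedDeriv_congr {f g : ℝ → Y} {x : ℝ} (h : f =ᶠ[nhds x] g) (m : ℕ) :
    iteratedDeriv m f x = iteratedDeriv m g x := by
  have H : ∀ m : ℕ, iteratedDeriv m f =ᶠ[nhds x] iteratedDeriv m g := by
    intro m
    induction m with
    | zero => simpa [iteratedDeriv_zero] using h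
    | succ m IH => rw [iteratedDeriv_succ, iteratedDeriv_succ]; exact IH.deriv
  exact (H m).self_of_nhds

lemma st17_smooth_nat {f : ℝ → Y} (hf : ContDiff ℝ (⊤ : ℕ∞) f) (m : ℕ) :
    ContDiff ℝ m f :=
  hf.of_le (by exact_mod_cast le_top)

lemma st17_iteratedDeriv_add {f g : ℝ → Y} (hf : ContDiff ℝ (⊤ : ℕ∞) f)
    (hg : ContDiff ℝ (⊤ : ℕ∞) g) (m : ℕ) (x : ℝ) :
    iteratedDeriv m (fun y => f y + g y) x = iteratedDeriv m f x + iteratedDeriv m g x := by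
  rw [iteratedDeriv_eq_iteratedFDeriv, iteratedDeriv_eq_iteratedFDeriv,
    iteratedDeriv_eq_iteratedFDeriv]
  rw [show (fun y => f y + g y) = f + g from rfl,
    iteratedFDeriv_add_apply (st17_smooth_nat hf m).contDiffAt (st17_smooth_nat hg m).contDiffAt]
  rfl

lemma st17_iteratedDeriv_sum {ι : Type*} [DecidableEq ι] (s : Finset ι) (h : ι → ℝ → Y)
    (hsm : ∀ i, ContDiff ℝ (⊤ : ℕ∞) (h i)) (m : ℕ) (x : ℝ) :
    iteratedDeriv m (fun y => ∑ i ∈ s, h i y) x = ∑ i ∈ s, iteratedDeriv m (h i) x := by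
  classical
  induction s using Finset.cons_induction with
  | empty =>
    simp only [Finset.sum_empty]
    rw [iteratedDeriv_eq_iteratedFDeriv, iteratedFDeriv_zero_fun]
    simp
  | cons a s ha IH =>
    rw [Finset.sum_cons]
    have : (fun y => ∑ i ∈ Finset.cons a s ha, h i y)
        = fun y => h a y + ∑ i ∈ s, h i y := by
      funext y; rw [Finset.sum_cons]
    rw [this, st17_iteratedDeriv_add (hsm a) (ContDiff.sum fun i _ => hsm i), IH]

lemma st17_hasDerivAt_iteratedDeriv {f : ℝ → Y} (hf : ContDiff ℝ (⊤ : ℕ∞) f) (m : ℕ) (x : ℝ) :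
    HasDerivAt (iteratedDeriv m f) (iteratedDeriv (m + 1) f x) x := by
  have h1 : ContDiff ℝ (⊤ : ℕ∞) (iteratedDeriv m f) := by
    rw [iteratedDeriv_eq_iterate]; exact hf.iterate_deriv m
  have h2 : DifferentiableAt ℝ (iteratedDeriv m f) x :=
    (h1.differentiable (by simp)).differentiableAt
  have := h2.hasDerivAt
  rwa [show deriv (iteratedDeriv m f) x = iteratedDeriv (m + 1) f x by
    rw [iteratedDeriv_succ]] at this

lemma st17_hasDerivAt_comp {k : ℕ} (P : ContinuousMultilinearMap ℝ (fun _ : Fin k => Y) W)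
    (g : Fin k → ℝ → Y) (g' : Fin k → Y) (x : ℝ) (hg : ∀ i, HasDerivAt (g i) (g' i) x) :
    HasDerivAt (fun y => P (fun i => g i y))
      (∑ i, P (Function.update (fun j => g j x) i (g' i))) x := by
  have h := HasFDerivAt.multilinear_comp (f := P) (g := g)
    (g' := fun i => ContinuousLinearMap.smulRight (1 : ℝ →L[ℝ] ℝ) (g' i)) (x := x)
    (fun i => (hg i).hasFDerivAt)
  have h2 := h.hasDerivAt
  simpa using h2

lemma st17_comp_iteratedDeriv {k : ℕ} (P : ContinuousMultilinearMap ℝ (fun _ : Fin k => Y) W)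
    {f : ℝ → Y} (hf : ContDiff ℝ (⊤ : ℕ∞) f) :
    ∀ (r : ℕ) (x : ℝ), iteratedDeriv r (fun y => P (fun _ : Fin k => f y)) x
      = ∑ c : Fin r → Fin k, P (fun i => iteratedDeriv (st17cnt c i) f x) := by
  intro r
  induction r with
  | zero =>
    intro x
    rw [iteratedDeriv_zero, Fintype.sum_unique]
    congr 1
  | succ r IH =>
    intro x
    rw [iteratedDeriv_succ]
    have hfe : iteratedDeriv r (fun y => P fun _ => f y)
        = fun y => ∑ c : Fin r → Fin k, P (fun i => iteratedDeriv (st17cnt c i) f y) :=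
      funext (fun y => IH y)
    rw [hfe]
    have hder : HasDerivAt
        (fun y => ∑ c : Fin r → Fin k, P (fun i => iteratedDeriv (st17cnt c i) f y))
        (∑ c : Fin r → Fin k, ∑ j : Fin k,
          P (Function.update (fun i => iteratedDeriv (st17cnt c i) f x) j
            (iteratedDeriv (st17cnt c j + 1) f x))) x := by
      apply HasDerivAt.fun_sum
      intro c _
      exact st17_hasDerivAt_comp P _ _ x (fun i => st17_hasDerivAt_iteratedDeriv hf _ x)
    rw [hder.deriv]
    have key : ∀ (c : Fin r → Fin k) (j : Fin k),
        (fun i => iteratedDeriv (st17cnt (Fin.cons j c) i) f x)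
          = Function.update (fun i => iteratedDeriv (st17cnt c i) f x) j
              (iteratedDeriv (st17cnt c j + 1) f x) := by
      intro c j
      funext i
      rcases eq_or_ne i j with rfl | h
      · rw [Function.update_self, st17cnt_cons]
        simp [Nat.add_comm]
      · rw [Function.update_of_ne h, st17cnt_cons]
        simp [Ne.symm h]
    have step1 : ∑ c' : Fin (r + 1) → Fin k, P (fun i => iteratedDeriv (st17cnt c' i) f x)
        = ∑ p : (Fin r → Fin k) × Fin k,
            P (fun i => iteratedDeriv (st17cnt (Fin.cons p.2 p.1) i) f x) := by
      refine (Fintype.sum_equiv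
        ((Equiv.prodComm _ _).trans (Fin.consEquiv fun _ : Fin (r + 1) => Fin k))
        _ _ ?_).symm
      rintro ⟨c, j⟩
      rfl
    rw [step1, Fintype.sum_prod_type]
    refine Finset.sum_congr rfl fun c _ => Finset.sum_congr rfl fun j _ => ?_
    show _ = P (fun i => iteratedDeriv (st17cnt (Fin.cons j c) i) f x)
    rw [key c j]

lemma st17_smul_iteratedDeriv :
    ∀ (s : ℕ) (G : ℝ → Y), ContDiff ℝ (⊤ : ℕ∞) G →
      iteratedDeriv (s + 1) (fun x : ℝ => x • G x) 0 = (s + 1 : ℕ) • iteratedDeriv s G 0 := by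
  intro s
  induction s with
  | zero =>
    intro G hG
    rw [show (0 + 1) = 1 from rfl, iteratedDeriv_one]
    have h := (hasDerivAt_id (0 : ℝ)).fun_smul
        ((hG.differentiable (by simp)).differentiableAt.hasDerivAt)
    simp only [id_eq] at h
    rw [h.deriv]
    simp [iteratedDeriv_zero]
  | succ s IH =>
    intro G hG
    have hG' : ContDiff ℝ (⊤ : ℕ∞) (deriv G) := (contDiff_infty_iff_deriv.mp hG).2
    have hDG : Differentiable ℝ G := hG.differentiable (by simp)
    have hd : deriv (fun x : ℝ => x • G x) = fun x => G x + x • deriv G x := by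
      funext x
      have h := (hasDerivAt_id x).fun_smul (hDG.differentiableAt.hasDerivAt)
      simp only [id_eq] at h
      rw [h.deriv, one_smul]
      exact add_comm _ _
    rw [iteratedDeriv_succ', hd]
    have hsm2 : ContDiff ℝ (⊤ : ℕ∞) (fun x : ℝ => x • deriv G x) := contDiff_id.smul hG'
    rw [st17_iteratedDeriv_add hG hsm2, IH _ hG']
    rw [show iteratedDeriv s (deriv G) 0 = iteratedDeriv (s + 1) G 0 by
      rw [iteratedDeriv_succ']]
    rw [succ_nsmul (iteratedDeriv (s + 1) G 0) (s + 1)]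
    rw [add_comm]

lemma st17_extend {f : ℝ → Y} {U : Set ℝ} (hU : IsOpen U) (h0 : (0 : ℝ) ∈ U)
    (hf : ContDiffOn ℝ (⊤ : ℕ∞) f U) :
    ∃ g : ℝ → Y, ContDiff ℝ (⊤ : ℕ∞) g ∧ g =ᶠ[nhds 0] f := by
  obtain ⟨ε, hε, hball⟩ : ∃ ε > 0, Metric.closedBall (0 : ℝ) ε ⊆ U := by
    rcases Metric.isOpen_iff.mp hU 0 h0 with ⟨δ, hδ, hsub⟩
    exact ⟨δ / 2, by linarith, (Metric.closedBall_subset_ball (by linarith)).trans hsub⟩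
  set χ : ContDiffBump (0 : ℝ) := ⟨ε / 2, ε, by linarith, by linarith⟩ with hχ
  refine ⟨fun x => χ x • f x, ?_, ?_⟩
  · rw [contDiff_iff_contDiffAt]
    intro x
    by_cases hx : x ∈ U
    · exact (χ.contDiffAt).smul (hf.contDiffAt (hU.mem_nhds hx))
    · have hscomp : x ∉ tsupport χ := by
        rw [χ.tsupport_eq]
        exact fun hm => hx (hball hm)
      have hev : (fun x => χ x • f x) =ᶠ[nhds x] (fun _ => (0 : Y)) := by
        filter_upwards [(isClosed_tsupport χ).isOpen_compl.mem_nhds hscomp] with y hy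
        rw [image_eq_zero_of_notMem_tsupport hy, zero_smul]
      exact (contDiffAt_const (c := (0 : Y))).congr_of_eventuallyEq hev
  · filter_upwards [χ.eventuallyEq_one] with y hy
    rw [hy, Pi.one_apply, one_smul]

end Aux

/-- Majorization of the Taylor coefficients of a smooth solution of the
polynomial fixed point equation `Z(λ) = λ·P(Z(λ)) + C` in a Banach space by the Taylor
coefficients of a scalar analytic solution of the majorant equation
`K(λ) = λ·𝔓(K(λ)) + ‖C‖`, where `𝔓(a) = Σₖ ‖Pₖ‖ aᵏ`. -/
theorem stmt_17 {X : Type*} [NormedAddCommGroup X] [NormedSpace ℝ X] [CompleteSpace X]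
    (n : ℕ) (P : ∀ k : Fin (n + 1), ContinuousMultilinearMap ℝ (fun _ : Fin k => X) X)
    (C : X) (U : Set ℝ) (hU : IsOpen U) (h0 : (0 : ℝ) ∈ U)
    (Z : ℝ → X) (hZ : ContDiffOn ℝ (⊤ : ℕ∞) Z U)
    (hZeq : ∀ lam ∈ U, Z lam = lam • (∑ k : Fin (n + 1), P k fun _ => Z lam) + C)
    (K : ℝ → ℝ) (hK : AnalyticAt ℝ K 0)
    (hKeq : ∀ᶠ lam in nhds (0 : ℝ),
      K lam = lam * (∑ k : Fin (n + 1), ‖P k‖ * K lam ^ (k : ℕ)) + ‖C‖) :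
    ∀ r : ℕ, ‖iteratedDeriv r Z 0‖ ≤ iteratedDeriv r K 0 := by
  classical
  -- globalize Z and K to globally smooth f, g agreeing with them near 0
  obtain ⟨f, hf, hfZ⟩ := st17_extend hU h0 hZ
  have hKsm : ∃ V : Set ℝ, IsOpen V ∧ (0 : ℝ) ∈ V ∧ ContDiffOn ℝ (⊤ : ℕ∞) K V := by
    obtain ⟨s, hs, hsub⟩ := hK.eventually_analyticAt.exists_mem
    obtain ⟨V, hVs, hVopen, hV0⟩ := mem_nhds_iff.mp hs
    exact ⟨V, hVopen, hV0,
      (AnalyticOnNhd.contDiffOn (fun y hy => hsub y (hVs hy)) hVopen.uniqueDiffOn)⟩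
  obtain ⟨V, hVopen, hV0, hKV⟩ := hKsm
  obtain ⟨g, hg, hgK⟩ := st17_extend hVopen hV0 hKV
  -- functional equations near 0 for f and g
  have hfe : ∀ᶠ lam in nhds (0 : ℝ),
      f lam = lam • (∑ k : Fin (n + 1), P k fun _ => f lam) + C := by
    filter_upwards [hfZ, hU.mem_nhds h0] with lam h1 h2
    rw [h1]; exact hZeq lam h2
  have hge : ∀ᶠ lam in nhds (0 : ℝ),
      g lam = lam * (∑ k : Fin (n + 1), ‖P k‖ * g lam ^ (k : ℕ)) + ‖C‖ := by
    filter_upwards [hgK, hKeq] with lam h1 h2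
    rw [h1]; exact h2
  suffices H : ∀ r : ℕ, ‖iteratedDeriv r f 0‖ ≤ iteratedDeriv r g 0 by
    intro r
    rw [st17_iteratedDeriv_congr hfZ.symm r, st17_iteratedDeriv_congr hgK.symm r]
    exact H r
  -- key: strong induction
  intro r
  induction r using Nat.strong_induction_on with
  | _ r IH =>
    match r with
    | 0 =>
      simp only [iteratedDeriv_zero]
      have h1 : f 0 = C := by simpa using hfe.self_of_nhds
      have h2 : g 0 = ‖C‖ := by simpa using hge.self_of_nhds
      rw [h1, h2]
    | (s + 1) =>
      set F : ℝ → X := fun lam => ∑ k : Fin (n + 1), P k (fun _ => f lam) with hFdef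
      set G : ℝ → ℝ := fun lam => ∑ k : Fin (n + 1), ‖P k‖ * g lam ^ (k : ℕ) with hGdef
      have hFk : ∀ k : Fin (n + 1), ContDiff ℝ (⊤ : ℕ∞) (fun y => P k (fun _ : Fin k => f y)) :=
        fun k => ((P k).contDiff).comp (contDiff_pi.mpr fun _ => hf)
      have hGk : ∀ k : Fin (n + 1), ContDiff ℝ (⊤ : ℕ∞) (fun y => ‖P k‖ * g y ^ (k : ℕ)) :=
        fun k => contDiff_const.mul (hg.pow _)
      have hFsm : ContDiff ℝ (⊤ : ℕ∞) F := ContDiff.sum fun k _ => hFk k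
      have hGsm : ContDiff ℝ (⊤ : ℕ∞) G := ContDiff.sum fun k _ => hGk k
      -- left side
      have e1 : iteratedDeriv (s + 1) f 0
          = iteratedDeriv (s + 1) (fun lam => lam • F lam + C) 0 :=
        st17_iteratedDeriv_congr hfe (s + 1)
      have e2 : iteratedDeriv (s + 1) (fun lam => lam • F lam + C) 0
          = iteratedDeriv (s + 1) (fun lam => lam • F lam) 0 := by
        rw [iteratedDeriv_succ', iteratedDeriv_succ']
        congr 1
        funext x
        exact deriv_add_const C
      have e3 : iteratedDeriv (s + 1) (fun lam : ℝ => lam • F lam) 0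
          = (s + 1 : ℕ) • iteratedDeriv s F 0 := st17_smul_iteratedDeriv s F hFsm
      -- right side
      have e1' : iteratedDeriv (s + 1) g 0
          = iteratedDeriv (s + 1) (fun lam => lam • G lam + ‖C‖) 0 := by
        refine st17_iteratedDeriv_congr ?_ (s + 1)
        filter_upwards [hge] with lam h1
        rw [h1]; rfl
      have e2' : iteratedDeriv (s + 1) (fun lam => lam • G lam + ‖C‖) 0
          = iteratedDeriv (s + 1) (fun lam => lam • G lam) 0 := by
        rw [iteratedDeriv_succ', iteratedDeriv_succ']
        congr 1
        funext x
        exact deriv_add_const ‖C‖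
      have e3' : iteratedDeriv (s + 1) (fun lam : ℝ => lam • G lam) 0
          = (s + 1 : ℕ) • iteratedDeriv s G 0 := st17_smul_iteratedDeriv s G hGsm
      -- expand F and G
      have eF : iteratedDeriv s F 0 = ∑ k : Fin (n + 1), ∑ c : Fin s → Fin (k : ℕ),
          P k (fun i => iteratedDeriv (st17cnt c i) f 0) := by
        rw [hFdef]
        rw [st17_iteratedDeriv_sum Finset.univ _ (fun k => hFk k) s 0]
        exact Finset.sum_congr rfl fun k _ => st17_comp_iteratedDeriv (P k) hf s 0
      have eG : iteratedDeriv s G 0 = ∑ k : Fin (n + 1), ∑ c : Fin s → Fin (k : ℕ),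
          ‖P k‖ * ∏ i, iteratedDeriv (st17cnt c i) g 0 := by
        rw [hGdef]
        rw [st17_iteratedDeriv_sum Finset.univ _ (fun k => hGk k) s 0]
        refine Finset.sum_congr rfl fun k _ => ?_
        have hfun : (fun y => ‖P k‖ * g y ^ (k : ℕ))
            = fun y => (‖P k‖ • ContinuousMultilinearMap.mkPiAlgebraFin ℝ (k : ℕ) ℝ)
                (fun _ : Fin (k : ℕ) => g y) := by
          funext y
          simp [List.ofFn_const, List.prod_replicate]
        rw [hfun, st17_comp_iteratedDeriv _ hg s 0]
        refine Finset.sum_congr rfl fun c _ => ?_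
        simp [Fin.prod_ofFn]
      -- estimate
      have hbound : ‖iteratedDeriv s F 0‖ ≤ iteratedDeriv s G 0 := by
        rw [eF, eG]
        refine (norm_sum_le _ _).trans (Finset.sum_le_sum fun k _ => ?_)
        refine (norm_sum_le _ _).trans (Finset.sum_le_sum fun c _ => ?_)
        refine ((P k).le_opNorm _).trans ?_
        refine mul_le_mul_of_nonneg_left ?_ (norm_nonneg _)
        refine Finset.prod_le_prod (fun i _ => norm_nonneg _) (fun i _ => ?_)
        exact IH (st17cnt c i) (Nat.lt_succ_of_le (st17cnt_le c i))
      rw [e1, e2, e3, e1', e2', e3']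
      rw [← Nat.cast_smul_eq_nsmul ℝ (s + 1) (iteratedDeriv s F 0),
        ← Nat.cast_smul_eq_nsmul ℝ (s + 1) (iteratedDeriv s G 0)]
      rw [norm_smul]
      rw [smul_eq_mul]
      have hzs : ‖((s + 1 : ℕ) : ℝ)‖ = ((s + 1 : ℕ) : ℝ) := by
        rw [Real.norm_natCast]
      rw [hzs]
      exact mul_le_mul_of_nonneg_left hbound (by positivity)
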